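/- If the base-19 representation of n contains at least two digits belonging to the set {4, 14}, then the Motzkin number M_n is divisible by 19. -/

import Mathlib

open Finset

def motzkin (n : ℕ) : ℕ := ∑ k ∈ Finset.range (n + 1), n.choose (2 * k) * catalan k

open Polynomial

lemma hockey (n r : ℕ) : ∑ i ∈ range (n+1), i.choose r = (n+1).choose (r+1) := by
  induction n with
  | zero =>
    cases r with
    | zero => simp
    | succ r => simp [Nat.choose_eq_zero_of_lt (by omega : (1:ℕ) < r + 1 + 1)]
  | succ n ih => rw [Finset.sum_range_succ, ih, Nat.choose_succ_succ (n+1) r, add_comm]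

lemma vand (r : ℕ) : ∀ n s, ∑ i ∈ range (n+1), i.choose r * ((n - i).choose s) = (n+1).choose (r+s+1) := by
  intro n
  induction n with
  | zero =>
    intro s
    cases r with
    | zero =>
      cases s with
      | zero => simp
      | succ s =>
        simp only [Nat.choose_zero_right, Nat.zero_sub, Nat.choose_succ_self, Finset.sum_range_one]
        exact (Nat.choose_eq_zero_of_lt (by omega)).symm
    | succ r =>
      simp [Nat.choose_eq_zero_of_lt (by omega : (1:ℕ) < r + 1 + _ + 1)]
  | succ n ih =>
    intro s
    cases s with
    | zero => simpa using hockey (n+1) r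
    | succ s =>
      rw [Finset.sum_range_succ]
      have h1 : ∀ i ∈ range (n+1), i.choose r * ((n + 1 - i).choose (s+1))
          = i.choose r * ((n - i).choose s) + i.choose r * ((n - i).choose (s+1)) := by
        intro i hi
        rw [Finset.mem_range] at hi
        have : n + 1 - i = (n - i) + 1 := by omega
        rw [this, Nat.choose_succ_succ, Nat.mul_add]
      rw [Finset.sum_congr rfl h1, Finset.sum_add_distrib, ih s, ih (s+1)]
      rw [Nat.sub_self, Nat.choose_zero_succ, Nat.mul_zero, Nat.add_zero]
      rw [show r + (s+1) + 1 = (r + s + 1) + 1 by ring, ← Nat.choose_succ_succ (n+1) (r+s+1)]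

lemma motzkin_ext {m k : ℕ} (hk : k ≤ m) :
    motzkin k = ∑ a ∈ range (m+1), k.choose (2*a) * catalan a := by
  unfold motzkin
  apply Finset.sum_subset
  · exact Finset.range_subset_range.2 (by omega)
  · intro a _ ha
    rw [Finset.mem_range, not_lt] at ha
    rw [Nat.choose_eq_zero_of_lt (by omega), Nat.zero_mul]

lemma conv_eq (m : ℕ) :
    ∑ k ∈ range (m+1), motzkin k * motzkin (m-k)
      = ∑ c ∈ range (m+1), (m+1).choose (2*c+1) * catalan (c+1) := by
  have step1 : ∑ k ∈ range (m+1), motzkin k * motzkin (m-k)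
      = ∑ a ∈ range (m+1), ∑ b ∈ range (m+1),
          catalan a * catalan b * (m+1).choose (2*a + 2*b + 1) := by
    have : ∀ k ∈ range (m+1), motzkin k * motzkin (m-k)
        = ∑ a ∈ range (m+1), ∑ b ∈ range (m+1),
            (k.choose (2*a) * catalan a) * ((m-k).choose (2*b) * catalan b) := by
      intro k hk
      rw [Finset.mem_range] at hk
      rw [motzkin_ext (by omega : k ≤ m), motzkin_ext (by omega : m - k ≤ m),
        Finset.sum_mul_sum]
    rw [Finset.sum_congr rfl this]
    rw [Finset.sum_comm]
    apply Finset.sum_congr rfl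
    intro a _
    rw [Finset.sum_comm]
    apply Finset.sum_congr rfl
    intro b _
    have : ∀ k ∈ range (m+1),
        (k.choose (2*a) * catalan a) * ((m-k).choose (2*b) * catalan b)
        = (catalan a * catalan b) * (k.choose (2*a) * ((m-k).choose (2*b))) := by
      intro k _; ring
    rw [Finset.sum_congr rfl this, ← Finset.mul_sum, vand (2*a) m (2*b)]
  rw [step1]
  have step2 : ∀ a ∈ range (m+1), ∑ b ∈ range (m+1),
        catalan a * catalan b * (m+1).choose (2*a + 2*b + 1)
      = ∑ b ∈ range (m+1-a), catalan a * catalan b * (m+1).choose (2*a + 2*b + 1) := by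
    intro a ha
    rw [Finset.mem_range] at ha
    refine (Finset.sum_subset (Finset.range_subset_range.2 (by omega)) ?_).symm
    intro b _ hb
    rw [Finset.mem_range, not_lt] at hb
    rw [Nat.choose_eq_zero_of_lt (by omega), Nat.mul_zero]
  rw [Finset.sum_congr rfl step2]
  rw [← Finset.sum_range_diag_flip (m+1)
      (fun a b => catalan a * catalan b * (m+1).choose (2*a + 2*b + 1))]
  apply Finset.sum_congr rfl
  intro c hc
  rw [Finset.mem_range] at hc
  have : ∀ j ∈ range (c+1),
      catalan j * catalan (c-j) * (m+1).choose (2*j + 2*(c-j) + 1)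
      = (m+1).choose (2*c+1) * (catalan j * catalan (c-j)) := by
    intro j hj
    rw [Finset.mem_range] at hj
    have : 2*j + 2*(c-j) = 2*c := by omega
    rw [this]; ring
  rw [Finset.sum_congr rfl this, ← Finset.mul_sum]
  congr 1
  rw [catalan_succ' c, Finset.Nat.sum_antidiagonal_eq_sum_range_succ_mk]

lemma motzkin_rec (m : ℕ) :
    motzkin (m+2) = motzkin (m+1) + ∑ k ∈ range (m+1), motzkin k * motzkin (m - k) := by
  rw [conv_eq]
  have e1 : motzkin (m+2) = 1 + ∑ k ∈ range (m+2), (m+2).choose (2*(k+1)) * catalan (k+1) := by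
    unfold motzkin
    rw [Finset.sum_range_succ' (fun k => (m+2).choose (2*k) * catalan k) (m+2)]
    simp [add_comm]
  have e2 : ∀ k ∈ range (m+2), (m+2).choose (2*(k+1)) * catalan (k+1)
      = (m+1).choose (2*k+1) * catalan (k+1) + (m+1).choose (2*(k+1)) * catalan (k+1) := by
    intro k _
    have h2 : 2*(k+1) = (2*k+1) + 1 := by ring
    rw [h2, Nat.choose_succ_succ, Nat.add_mul]
  rw [e1, Finset.sum_congr rfl e2, Finset.sum_add_distrib]
  have e3 : 1 + (∑ k ∈ range (m+2), (m+1).choose (2*k+1) * catalan (k+1)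
        + ∑ k ∈ range (m+2), (m+1).choose (2*(k+1)) * catalan (k+1))
      = (1 + ∑ k ∈ range (m+2), (m+1).choose (2*(k+1)) * catalan (k+1))
        + ∑ k ∈ range (m+2), (m+1).choose (2*k+1) * catalan (k+1) := by ring
  rw [e3]
  congr 1
  · -- equals motzkin (m+1)
    have : motzkin (m+1) = ∑ k ∈ range (m+3), (m+1).choose (2*k) * catalan k := by
      rw [show m+3 = (m+2)+1 by rfl]
      exact motzkin_ext (by omega)
    rw [this, Finset.sum_range_succ' (fun k => (m+1).choose (2*k) * catalan k) (m+2)]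
    simp [add_comm]
  · -- trim last term
    rw [Finset.sum_range_succ]
    rw [Nat.choose_eq_zero_of_lt (by omega), Nat.zero_mul, Nat.add_zero]


abbrev K19 : Type := ZMod 19

instance : Fact (Nat.Prime 19) := ⟨by norm_num⟩

noncomputable def fpoly : K19[X] := 1 + (Polynomial.C (-2) * Polynomial.X + Polynomial.C (-3) * Polynomial.X ^ 2)

noncomputable def Rpoly : K19[X] := fpoly ^ 9

noncomputable def rc (d : ℕ) : K19 := Rpoly.coeff d

lemma fpoly_coeff (m : ℕ) : fpoly.coeff m
    = if m = 0 then 1 else if m = 1 then -2 else if m = 2 then -3 else 0 := by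
  simp only [fpoly, Polynomial.coeff_add, Polynomial.coeff_one, Polynomial.coeff_C_mul,
    Polynomial.coeff_X, Polynomial.coeff_X_pow]
  split_ifs <;> first | omega | ring

lemma fpoly_natDegree : fpoly.natDegree ≤ 2 := by
  unfold fpoly
  apply le_trans (Polynomial.natDegree_add_le _ _)
  simp only [Polynomial.natDegree_one]
  apply max_le (by omega)
  apply le_trans (Polynomial.natDegree_add_le _ _)
  apply max_le
  · exact le_trans (Polynomial.natDegree_C_mul_le _ _) (le_trans Polynomial.natDegree_X_le (by omega))
  · exact le_trans (Polynomial.natDegree_C_mul_le _ _) (le_of_eq (Polynomial.natDegree_X_pow 2))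

lemma rc_high {d : ℕ} (hd : 19 ≤ d) : rc d = 0 := by
  apply Polynomial.coeff_eq_zero_of_natDegree_lt
  calc Rpoly.natDegree ≤ 9 * fpoly.natDegree := Polynomial.natDegree_pow_le
    _ ≤ 18 := by have := fpoly_natDegree; omega
    _ < d := by omega

lemma fpoly_factor : fpoly = (1 + Polynomial.C (-3 : K19) * Polynomial.X) * (1 + Polynomial.C (1 : K19) * Polynomial.X) := by
  have h3 : Polynomial.C (-3 : K19) = -3 := by
    rw [map_neg, map_ofNat]
  have h2 : Polynomial.C (-2 : K19) = -2 := by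
    rw [map_neg, map_ofNat]
  have h1 : Polynomial.C (1 : K19) = 1 := map_one _
  rw [fpoly, h1, h2, h3]
  ring

lemma coeff_one_add_CX_pow (c : K19) (n k : ℕ) :
    ((1 + Polynomial.C c * Polynomial.X) ^ n).coeff k = c ^ k * n.choose k := by
  rw [add_comm (1 : K19[X]), add_pow]
  simp only [one_pow, mul_one, Polynomial.finset_sum_coeff, mul_pow, ← map_pow,
    ← Polynomial.C_eq_natCast]
  have : ∀ m ∈ range (n+1),
      (Polynomial.C (c^m) * Polynomial.X ^ m * Polynomial.C ((n.choose m : K19))).coeff k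
      = if k = m then c ^ m * (n.choose m : K19) else 0 := by
    intro m _
    rw [mul_comm (Polynomial.C (c^m) * Polynomial.X ^ m), ← mul_assoc, ← map_mul,
      Polynomial.coeff_C_mul, Polynomial.coeff_X_pow]
    split_ifs <;> ring
  rw [Finset.sum_congr rfl this, Finset.sum_ite_eq (range (n+1)) k]
  split_ifs with h
  · rfl
  · rw [Finset.mem_range, not_lt] at h
    rw [Nat.choose_eq_zero_of_lt (by omega), Nat.cast_zero, mul_zero]

lemma rc_eval (d : ℕ) : rc d = ∑ i ∈ range (d+1),
    ((-3 : K19) ^ i * (9).choose i) * ((1:K19) ^ (d-i) * (9).choose (d-i)) := by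
  rw [rc, Rpoly, fpoly_factor, mul_pow, Polynomial.coeff_mul,
    Finset.Nat.sum_antidiagonal_eq_sum_range_succ_mk]
  exact Finset.sum_congr rfl fun i _ => by rw [coeff_one_add_CX_pow, coeff_one_add_CX_pow]

lemma rc4 : rc 4 = 0 := by
  rw [rc_eval]
  simp only [Finset.sum_range_succ, Finset.sum_range_zero]
  norm_num
  decide

lemma rc14 : rc 14 = 0 := by
  rw [rc_eval]
  simp only [Finset.sum_range_succ, Finset.sum_range_zero]
  norm_num
  decide

lemma rc0 : rc 0 = 1 := by
  rw [rc_eval]; simp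


-- digit product sequence
noncomputable def tt (n : ℕ) : K19 := ((Nat.digits 19 n).map rc).prod

lemma tt_zero : tt 0 = 1 := by simp [tt]

lemma tt_step (a b : ℕ) (hb : b < 19) : tt (19 * a + b) = rc b * tt a := by
  rcases Nat.eq_zero_or_pos (19 * a + b) with h | h
  · have hb0 : b = 0 := by omega
    have ha0 : a = 0 := by omega
    simp [hb0, ha0, tt_zero, rc0]
  · rw [tt, Nat.digits_def' (by omega : 1 < 19) h]
    have h1 : (19 * a + b) % 19 = b := by omega
    have h2 : (19 * a + b) / 19 = a := by omega
    rw [h1, h2, List.map_cons, List.prod_cons]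
    rfl

open PowerSeries

noncomputable def Tser : PowerSeries K19 := PowerSeries.mk tt

noncomputable def Eser (U : PowerSeries K19) : PowerSeries K19 :=
  PowerSeries.mk fun n => if 19 ∣ n then PowerSeries.coeff (n / 19) U else 0

lemma T_eq : Tser = (Rpoly : PowerSeries K19) * Eser Tser := by
  ext n
  rw [PowerSeries.coeff_mul]
  rw [Finset.sum_eq_single (n % 19, 19 * (n / 19))]
  · simp only [Polynomial.coeff_coe, Eser, Tser, PowerSeries.coeff_mk]
    rw [if_pos ⟨n / 19, rfl⟩]
    have h19 : 19 * (n / 19) / 19 = n / 19 := by omega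
    rw [h19]
    have := tt_step (n / 19) (n % 19) (by omega)
    rw [show 19 * (n / 19) + n % 19 = n by omega] at this
    rw [this, rc]
  · rintro ⟨i, j⟩ hmem hne
    rw [Finset.HasAntidiagonal.mem_antidiagonal] at hmem
    simp only [Polynomial.coeff_coe, Eser, PowerSeries.coeff_mk]
    by_cases hdvd : 19 ∣ j
    · obtain ⟨c, rfl⟩ := hdvd
      rcases Nat.lt_or_ge i 19 with hi | hi
      · exfalso; apply hne
        have : c = n / 19 ∧ i = n % 19 := by omega
        simp [this.1, this.2]
      · rw [show Rpoly.coeff i = rc i from rfl, rc_high hi, zero_mul]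
    · rw [if_neg hdvd, mul_zero]
  · intro hmem
    exfalso
    exact hmem (Finset.HasAntidiagonal.mem_antidiagonal.2 (by omega))

lemma E_mul (U V : PowerSeries K19) : Eser (U * V) = Eser U * Eser V := by
  ext n
  rw [PowerSeries.coeff_mul]
  simp only [Eser, PowerSeries.coeff_mk]
  by_cases hn : 19 ∣ n
  · obtain ⟨m, rfl⟩ := hn
    rw [if_pos ⟨m, rfl⟩]
    have hmd : 19 * m / 19 = m := by omega
    rw [hmd, PowerSeries.coeff_mul]
    rw [← Finset.sum_subset
      (Finset.image_subset_iff.2 ?hsub :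
        (Finset.HasAntidiagonal.antidiagonal m).image (fun p => (19 * p.1, 19 * p.2)) ⊆ Finset.HasAntidiagonal.antidiagonal (19 * m))
      ?hzero]
    · rw [Finset.sum_image ?hinj]
      · apply Finset.sum_congr rfl
        rintro ⟨a, b⟩ _
        rw [if_pos ⟨a, rfl⟩, if_pos ⟨b, rfl⟩]
        have h1 : 19 * a / 19 = a := by omega
        have h2 : 19 * b / 19 = b := by omega
        rw [h1, h2]
      · rintro ⟨a, b⟩ _ ⟨c, d⟩ _ h
        simp only [Prod.mk.injEq] at h ⊢
        omega
    case hsub =>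
      rintro ⟨a, b⟩ hab
      rw [Finset.HasAntidiagonal.mem_antidiagonal] at hab
      rw [Finset.HasAntidiagonal.mem_antidiagonal]
      omega
    case hzero =>
      rintro ⟨i, j⟩ hij hnot
      by_cases hdi : 19 ∣ i
      · by_cases hdj : 19 ∣ j
        · exfalso
          apply hnot
          rw [Finset.HasAntidiagonal.mem_antidiagonal] at hij
          obtain ⟨a, rfl⟩ := hdi
          obtain ⟨b, rfl⟩ := hdj
          refine Finset.mem_image.2 ⟨(a, b), Finset.HasAntidiagonal.mem_antidiagonal.2 (by omega), rfl⟩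
        · rw [if_neg hdj, mul_zero]
      · rw [if_neg hdi, zero_mul]
  · rw [if_neg hn]
    symm
    apply Finset.sum_eq_zero
    rintro ⟨i, j⟩ hij
    rw [Finset.HasAntidiagonal.mem_antidiagonal] at hij
    by_cases hdi : 19 ∣ i
    · by_cases hdj : 19 ∣ j
      · exfalso; exact hn (by omega)
      · rw [if_neg hdj, mul_zero]
    · rw [if_neg hdi, zero_mul]

lemma Efix {U : PowerSeries K19} (h : U = Eser U) (h0 : PowerSeries.coeff 0 U = 1) :
    U = 1 := by
  ext n
  induction n using Nat.strong_induction_on with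
  | _ n ih =>
    rcases Nat.eq_zero_or_pos n with rfl | hn
    · simpa using h0
    · rw [PowerSeries.coeff_one, if_neg (by omega)]
      conv_lhs => rw [h]
      simp only [Eser, PowerSeries.coeff_mk]
      by_cases hd : 19 ∣ n
      · have hlt : n / 19 < n := by omega
        have hpos : 0 < n / 19 := by
          rcases hd with ⟨c, rfl⟩; omega
        rw [if_pos hd]
        have := ih (n / 19) hlt
        rw [PowerSeries.coeff_one, if_neg (by omega)] at this
        exact this
      · rw [if_neg hd]

noncomputable def fqoly : K19[X] :=
  1 + (Polynomial.C (-2) * Polynomial.X ^ 19 + Polynomial.C (-3) * Polynomial.X ^ 38)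

lemma poly_frob : fpoly ^ 19 = fqoly := by
  have hchar : CharP K19[X] 19 := by infer_instance
  rw [fpoly, add_pow_char, add_pow_char, one_pow, mul_pow, mul_pow, ← map_pow, ← map_pow,
    ← pow_mul]
  rw [show ((-2 : K19) ^ 19) = -2 by decide, show ((-3 : K19) ^ 19) = -3 by decide]
  rfl

lemma fqoly_coeff (m : ℕ) : fqoly.coeff m
    = if m = 0 then 1 else if m = 19 then -2 else if m = 38 then -3 else 0 := by
  simp only [fqoly, Polynomial.coeff_add, Polynomial.coeff_one, Polynomial.coeff_C_mul,
    Polynomial.coeff_X_pow]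
  split_ifs <;> first | omega | ring

lemma E_F : Eser (fpoly : PowerSeries K19) = (fqoly : PowerSeries K19) := by
  ext n
  simp only [Eser, PowerSeries.coeff_mk, Polynomial.coeff_coe, fqoly_coeff, fpoly_coeff]
  by_cases hd : 19 ∣ n
  · rw [if_pos hd]
    obtain ⟨c, rfl⟩ := hd
    have : 19 * c / 19 = c := by omega
    rw [this]
    split_ifs <;> first | rfl | omega
  · rw [if_neg hd]
    split_ifs <;> first | rfl | (exfalso; omega)

lemma FT2 : (fpoly : PowerSeries K19) * (Tser * Tser) = 1 := by
  set U : PowerSeries K19 := (fpoly : PowerSeries K19) * (Tser * Tser) with hU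
  have hfix : U = Eser U := by
    have h1 : U = ((fpoly * Rpoly * Rpoly : K19[X]) : PowerSeries K19)
        * (Eser Tser * Eser Tser) := by
      rw [hU]
      conv_lhs => rw [T_eq]
      push_cast [Polynomial.coe_mul]
      ring
    have h2 : (fpoly * Rpoly * Rpoly : K19[X]) = fqoly := by
      rw [← poly_frob, Rpoly]; ring
    conv_lhs => rw [h1, h2]
    rw [← E_F, ← E_mul, ← E_mul, ← hU]
  have h0 : PowerSeries.coeff 0 U = 1 := by
    rw [hU]
    rw [PowerSeries.coeff_zero_eq_constantCoeff_apply, map_mul, map_mul]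
    have hT : PowerSeries.constantCoeff Tser = 1 := by
      rw [Tser, PowerSeries.constantCoeff_mk, tt_zero]
    have hF : PowerSeries.constantCoeff (fpoly : PowerSeries K19) = 1 := by
      rw [← PowerSeries.coeff_zero_eq_constantCoeff_apply, Polynomial.coeff_coe, fpoly_coeff]
      rfl
    rw [hT, hF]; ring
  exact Efix hfix h0

lemma motzkin_zero : motzkin 0 = 1 := by simp [motzkin]

lemma motzkin_one : motzkin 1 = 1 := by
  simp [motzkin, Finset.sum_range_succ]

noncomputable def sg : ℕ → K19
  | 0 => 1
  | 1 => -1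
  | (k+2) => -2 * (motzkin k : K19)

noncomputable def Gser : PowerSeries K19 := PowerSeries.mk sg

lemma sg_conv (n : ℕ) :
    ∑ k ∈ range (n+1), sg k * sg (n - k) = fpoly.coeff n := by
  match n with
  | 0 => simp [sg, fpoly_coeff]
  | 1 =>
    rw [fpoly_coeff]
    simp only [Finset.sum_range_succ, Finset.sum_range_zero, zero_add]
    show sg 0 * sg 1 + sg 1 * sg 0 = _
    norm_num [sg]
  | 2 =>
    rw [fpoly_coeff]
    simp only [Finset.sum_range_succ, Finset.sum_range_zero]
    show (0:K19) + sg 0 * sg 2 + sg 1 * sg 1 + sg 2 * sg 0 = _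
    norm_num [sg, motzkin_zero]
  | (m+3) =>
    rw [fpoly_coeff, if_neg (by omega), if_neg (by omega), if_neg (by omega)]
    -- peel the two ends
    rw [Finset.sum_range_succ, Finset.sum_range_succ,
      Finset.sum_range_succ' (fun k => sg k * sg (m + 3 - k)) (m+1),
      Finset.sum_range_succ' (fun k => sg (k+1) * sg (m + 3 - (k+1))) m]
    have h1 : ∀ j ∈ range m, sg (j+1+1) * sg (m + 3 - (j+1+1))
        = (-2 * (motzkin j : K19)) * (-2 * (motzkin (m-1-j) : K19)) := by
      intro j hj
      rw [Finset.mem_range] at hj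
      have e1 : j+1+1 = j+2 := by omega
      have e2 : m + 3 - (j+1+1) = (m-1-j)+2 := by omega
      rw [e1, e2]
      rfl
    rw [Finset.sum_congr rfl h1]
    have e3 : m + 3 - (0+1) = m + 2 := by omega
    have e4 : m + 3 - 0 = m + 3 := by omega
    have e5 : m + 3 - (m+2) = 1 := by omega
    have e6 : m + 3 - (m+3) = 0 := by omega
    rw [e3, e4, e5, e6]
    show (∑ j ∈ range m, (-2 * (motzkin j : K19)) * (-2 * (motzkin (m-1-j) : K19)))
        + (-1) * (-2 * (motzkin m : K19)) + 1 * (-2 * (motzkin (m+1) : K19))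
        + (-2 * (motzkin m : K19)) * (-1) + (-2 * (motzkin (m+1) : K19)) * 1 = 0
    have key : (motzkin (m+1) : K19)
        = (motzkin m : K19) + ∑ j ∈ range m, (motzkin j : K19) * (motzkin (m-1-j) : K19) := by
      rcases Nat.eq_zero_or_pos m with rfl | hm
      · simp [motzkin_zero, motzkin_one]
      · obtain ⟨m', rfl⟩ := Nat.exists_eq_add_of_le hm
        have := motzkin_rec m'
        have hcast := congrArg (fun x : ℕ => (x : K19)) this
        push_cast at hcast
        rw [show 1 + m' = m' + 1 by omega, show m' + 1 + 1 = m' + 2 by omega,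
          show m' + 1 - 1 = m' by omega] at *
        rw [hcast]
    have expand : (∑ j ∈ range m, (-2 * (motzkin j : K19)) * (-2 * (motzkin (m-1-j) : K19)))
        = 4 * ∑ j ∈ range m, (motzkin j : K19) * (motzkin (m-1-j) : K19) := by
      rw [Finset.mul_sum]
      apply Finset.sum_congr rfl
      intro j _; ring
    rw [expand, key]
    ring

lemma Gsq : Gser * Gser = (fpoly : PowerSeries K19) := by
  ext n
  rw [PowerSeries.coeff_mul, Finset.Nat.sum_antidiagonal_eq_sum_range_succ_mk,
    Polynomial.coeff_coe, ← sg_conv n]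
  exact Finset.sum_congr rfl fun k _ => by rw [Gser, PowerSeries.coeff_mk, PowerSeries.coeff_mk]

lemma G_eq : Gser = (fpoly : PowerSeries K19) * Tser := by
  have hzero : (Gser - (fpoly : PowerSeries K19) * Tser)
      * (Gser + (fpoly : PowerSeries K19) * Tser) = 0 := by
    have : (Gser - (fpoly : PowerSeries K19) * Tser)
        * (Gser + (fpoly : PowerSeries K19) * Tser)
        = Gser * Gser - (fpoly : PowerSeries K19) * ((fpoly : PowerSeries K19) * (Tser * Tser)) := by
      ring
    rw [this, FT2, Gsq, mul_one, sub_self]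
  rcases mul_eq_zero.1 hzero with h | h
  · exact sub_eq_zero.1 h
  · exfalso
    have := congrArg (PowerSeries.coeff 0) h
    rw [map_add, PowerSeries.coeff_zero_eq_constantCoeff_apply,
      PowerSeries.coeff_zero_eq_constantCoeff_apply, map_mul] at this
    rw [show PowerSeries.constantCoeff Gser = 1 from rfl] at this
    rw [show PowerSeries.constantCoeff (fpoly : PowerSeries K19) = 1 by
      rw [← PowerSeries.coeff_zero_eq_constantCoeff_apply, Polynomial.coeff_coe, fpoly_coeff]; rfl,
      show PowerSeries.constantCoeff Tser = 1 by rw [Tser, PowerSeries.constantCoeff_mk, tt_zero]] at this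
    rw [PowerSeries.coeff_zero_eq_constantCoeff_apply] at this
    norm_num at this
    exact (by decide : (1 : K19) + 1 ≠ 0) this
  
lemma main_congr (n : ℕ) :
    -2 * (motzkin n : K19) = tt (n+2) + (-2) * tt (n+1) + (-3) * tt n := by
  have hFT : (fpoly : PowerSeries K19) * Tser
      = Tser + PowerSeries.C (-2) * (PowerSeries.X * Tser)
        + PowerSeries.C (-3) * (PowerSeries.X ^ 2 * Tser) := by
    have : (fpoly : PowerSeries K19)
        = 1 + PowerSeries.C (-2) * PowerSeries.X
          + PowerSeries.C (-3) * PowerSeries.X ^ 2 := by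
      rw [fpoly]
      push_cast [Polynomial.coe_add, Polynomial.coe_mul, Polynomial.coe_one,
        Polynomial.coe_C, Polynomial.coe_X, Polynomial.coe_pow]
      ring
    rw [this]; ring
  have := congrArg (PowerSeries.coeff (n+2)) (G_eq.trans hFT)
  rw [Gser, PowerSeries.coeff_mk, map_add, map_add, PowerSeries.coeff_C_mul,
    PowerSeries.coeff_C_mul, PowerSeries.coeff_succ_X_mul,
    show n + 2 = n + 2 by rfl] at this
  rw [PowerSeries.coeff_X_pow_mul Tser 2 n] at this
  rw [show sg (n+2) = -2 * (motzkin n : K19) from rfl] at this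
  rw [this, Tser, PowerSeries.coeff_mk, PowerSeries.coeff_mk, PowerSeries.coeff_mk]

def cnt (n : ℕ) : ℕ := (Nat.digits 19 n).countP (fun d => decide (d = 4 ∨ d = 14))

lemma cnt_eq (a b : ℕ) (hb : b < 19) (h : 0 < 19 * a + b) :
    cnt (19 * a + b) = (if b = 4 ∨ b = 14 then 1 else 0) + cnt a := by
  unfold cnt
  rw [Nat.digits_def' (by omega : 1 < 19) h]
  have h1 : (19 * a + b) % 19 = b := by omega
  have h2 : (19 * a + b) / 19 = a := by omega
  rw [h1, h2, List.countP_cons]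
  simp only [decide_eq_true_eq]
  split_ifs <;> omega

lemma cnt_zero : cnt 0 = 0 := by simp [cnt]

lemma tt_of_cnt_pos {n : ℕ} (h : 1 ≤ cnt n) : tt n = 0 := by
  unfold cnt at h
  obtain ⟨d, hd, hspec⟩ := List.countP_pos_iff.mp (show 0 < _ from h)
  have hspec2 : d = 4 ∨ d = 14 := by simpa using hspec
  apply List.prod_eq_zero
  rw [List.mem_map]
  refine ⟨d, hd, ?_⟩
  rcases hspec2 with rfl | rfl
  · exact rc4
  · exact rc14

lemma cnt_succ (n : ℕ) : cnt n ≤ cnt (n + 1) + 1 := by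
  induction n using Nat.strong_induction_on with
  | _ n ih =>
    rcases Nat.eq_zero_or_pos n with rfl | hn
    · simp [cnt_zero]
    · set b := n % 19 with hb
      set a := n / 19 with ha
      have hab : n = 19 * a + b := by omega
      by_cases h18 : b < 18
      · have e1 : cnt n = (if b = 4 ∨ b = 14 then 1 else 0) + cnt a := by
          rw [hab] at hn ⊢; exact cnt_eq a b (by omega) hn
        have e2 : cnt (n + 1) = (if b + 1 = 4 ∨ b + 1 = 14 then 1 else 0) + cnt a := by
          rw [show n + 1 = 19 * a + (b + 1) by omega]
          exact cnt_eq a (b+1) (by omega) (by omega)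
        rw [e1, e2]
        split_ifs <;> omega
      · have hb18 : b = 18 := by omega
        have e1 : cnt n = cnt a := by
          rw [hab] at hn ⊢
          rw [cnt_eq a b (by omega) hn, hb18]
          norm_num
        have e2 : cnt (n + 1) = cnt (a + 1) := by
          rw [show n + 1 = 19 * (a + 1) + 0 by omega]
          rw [cnt_eq (a+1) 0 (by omega) (by omega)]
          norm_num
        have halt : a < n := by omega
        have := ih a halt
        omega

lemma cnt_two {n : ℕ} (h : 2 ≤ cnt n) :
    1 ≤ cnt n ∧ 1 ≤ cnt (n + 1) ∧ 1 ≤ cnt (n + 2) := by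
  have hn : 0 < n := by
    rcases Nat.eq_zero_or_pos n with rfl | hn
    · rw [cnt_zero] at h; omega
    · exact hn
  refine ⟨by omega, by have := cnt_succ n; omega, ?_⟩
  set b := n % 19 with hb
  set a := n / 19 with ha
  have hab : n = 19 * a + b := by omega
  have e1 : cnt n = (if b = 4 ∨ b = 14 then 1 else 0) + cnt a := by
    rw [hab] at hn ⊢; exact cnt_eq a b (by omega) hn
  by_cases h16 : b ≤ 16
  · have e2 : cnt (n + 2) = (if b + 2 = 4 ∨ b + 2 = 14 then 1 else 0) + cnt a := by
      rw [show n + 2 = 19 * a + (b + 2) by omega]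
      exact cnt_eq a (b+2) (by omega) (by omega)
    rw [e1] at h
    rw [e2]
    split_ifs at h ⊢ <;> omega
  · have hs : cnt a ≥ 2 - 1 := by
      rw [e1] at h
      have : ¬ (b = 4 ∨ b = 14) := by omega
      rw [if_neg this] at h
      omega
    have hsucc := cnt_succ a
    by_cases h17 : b = 17
    · have e2 : cnt (n + 2) = cnt (a + 1) := by
        rw [show n + 2 = 19 * (a + 1) + 0 by omega, cnt_eq (a+1) 0 (by omega) (by omega)]
        norm_num
      rw [e1, if_neg (by omega)] at h
      omega
    · have hb18 : b = 18 := by omega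
      have e2 : cnt (n + 2) = cnt (a + 1) := by
        rw [show n + 2 = 19 * (a + 1) + 1 by omega, cnt_eq (a+1) 1 (by omega) (by omega)]
        norm_num
      rw [e1, if_neg (by omega)] at h
      omega

theorem motzkin_two_special_base19 (n : ℕ)
    (h : 2 ≤ (Nat.digits 19 n).countP (fun d => decide (d = 4 ∨ d = 14))) :
    19 ∣ motzkin n := by
  have h2 : 2 ≤ cnt n := h
  obtain ⟨c0, c1, c2⟩ := cnt_two h2
  have hm := main_congr n
  rw [tt_of_cnt_pos c0, tt_of_cnt_pos c1, tt_of_cnt_pos c2] at hm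
  have hz : (motzkin n : K19) = 0 := by
    have : (-2 : K19) * (motzkin n : K19) = 0 := by rw [hm]; ring
    rcases mul_eq_zero.1 this with h' | h'
    · exact absurd h' (by decide)
    · exact h'
  exact (ZMod.natCast_eq_zero_iff _ _).1 hz
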